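/- Let A be a σ-unital C*-algebra with strictly positive element e ∈ A₊, let B be a C*-algebra, and let φ : A → B be a contractive positive linear map. Then the hereditary sub-C*-algebra of B generated by φ(e) coincides with the sub-C*-algebra closure of φ(A)·B·φ(A); that is, closure(φ(e) B φ(e)) = closure(span{φ(x) b φ(y) : x, y ∈ A, b ∈ B}). -/

import Mathlib

open Unitization CStarAlgebra

set_option maxHeartbeats 1000000 in
lemma core_hered {B : Type*} [NonUnitalCStarAlgebra B] [PartialOrder B] [StarOrderedRing B]
    {h c : B} (hh : 0 ≤ h) (hc : 0 ≤ c) (hch : c ≤ h) :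
    c ∈ closure {z : B | ∃ b : B, z = h * b * h} := by
  rw [Metric.mem_closure_iff]
  intro δ hδ
  obtain ⟨ε, hε, hlt⟩ : ∃ ε : ℝ, 0 < ε ∧ ‖c‖ * ε < δ ^ 2 := by
    refine ⟨δ ^ 2 / (‖c‖ + 1), by positivity, ?_⟩
    rw [mul_div_assoc', div_lt_iff₀ (by positivity)]
    nlinarith [norm_nonneg c, pow_pos hδ 2]
  have hH : (0 : Unitization ℂ B) ≤ (h : Unitization ℂ B) := inr_nonneg_iff.mpr hh
  set H : Unitization ℂ B := (h : Unitization ℂ B) with hHdef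
  set C : Unitization ℂ B := (c : Unitization ℂ B) with hCdef
  have hC : (0 : Unitization ℂ B) ≤ C := inr_nonneg_iff.mpr hc
  have hCsa : IsSelfAdjoint C := IsSelfAdjoint.of_nonneg hC
  have hHsa : IsSelfAdjoint H := IsSelfAdjoint.of_nonneg hH
  have hCH : C ≤ H :=
    (inr_le_iff c h (IsSelfAdjoint.of_nonneg hc) (IsSelfAdjoint.of_nonneg hh)).mpr hch
  have hsp : ∀ t ∈ spectrum ℝ H, 0 ≤ t := fun t ht => spectrum_nonneg_of_nonneg hH ht
  have hsp' : ∀ t ∈ spectrum ℝ H, t + ε ≠ 0 := fun t ht => by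
    have := hsp t ht; positivity
  set f : ℝ → ℝ := fun t => t / (t + ε) with hf
  set g : ℝ → ℝ := fun t => ε / (t + ε) with hg
  set r : ℝ → ℝ := fun t => (t + ε)⁻¹ with hr
  have hfc : ContinuousOn f (spectrum ℝ H) :=
    ContinuousOn.div continuousOn_id (by fun_prop) hsp'
  have hgc : ContinuousOn g (spectrum ℝ H) :=
    ContinuousOn.div continuousOn_const (by fun_prop) hsp'
  have hrc : ContinuousOn r (spectrum ℝ H) :=
    ContinuousOn.inv₀ (by fun_prop) hsp'
  set w : Unitization ℂ B := cfc f H with hw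
  set v : Unitization ℂ B := cfc r H with hv
  set d : Unitization ℂ B := cfc g H with hd
  have hdnn : 0 ≤ d := cfc_nonneg fun t ht => by
    have := hsp t ht; positivity
  have hdsa : IsSelfAdjoint d := IsSelfAdjoint.of_nonneg hdnn
  have hwfact : w = H * v := by
    have h1 := cfc_mul (fun t : ℝ => t) r H (by fun_prop) hrc
    rw [cfc_id' ℝ H] at h1
    rw [hw, hv, ← h1]
    exact cfc_congr fun t ht => (div_eq_mul_inv _ _)
  have hwfact' : w = v * H := by
    have h1 := cfc_mul r (fun t : ℝ => t) H hrc (by fun_prop)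
    rw [cfc_id' ℝ H] at h1
    rw [hw, hv, ← h1]
    exact cfc_congr fun t ht => by
      simp only [f, r, div_eq_mul_inv, mul_comm]
  have hw1 : w = 1 - d := by
    have h1 := cfc_sub (fun _ : ℝ => (1 : ℝ)) g H (by fun_prop) hgc
    rw [cfc_const_one ℝ H] at h1
    rw [hw, hd, ← h1]
    refine cfc_congr fun t ht => ?_
    have ht' := hsp' t ht
    simp only [f, g]
    rw [eq_sub_iff_add_eq, ← add_div, div_eq_one_iff_eq ht']
  have hwnorm : ‖w‖ ≤ 1 := by
    rw [hw]
    refine norm_cfc_le zero_le_one fun t ht => ?_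
    have h0 := hsp t ht
    have h1 : (0:ℝ) < t + ε := by linarith
    rw [Real.norm_eq_abs, abs_of_nonneg (by positivity), div_le_one h1]
    linarith
  have hdHdnorm : ‖d * H * d‖ ≤ ε / 4 := by
    have h2 := cfc_mul g (fun t : ℝ => t) H hgc (by fun_prop)
    rw [cfc_id' ℝ H] at h2
    have h1 := cfc_mul (fun t => g t * t) g H (hgc.mul (by fun_prop)) hgc
    beta_reduce at h1
    have key : d * H * d = cfc (fun t => g t * t * g t) H := by
      rw [hd, ← h2, ← h1]
    rw [key]
    refine norm_cfc_le (by positivity) fun t ht => ?_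
    have h0 := hsp t ht
    have h1' : (0:ℝ) < t + ε := by linarith
    rw [Real.norm_eq_abs, abs_of_nonneg (by positivity)]
    show ε / (t + ε) * t * (ε / (t + ε)) ≤ ε / 4
    rw [div_mul_eq_mul_div, div_mul_div_comm, div_le_div_iff₀ (by positivity) (by norm_num)]
    nlinarith [sq_nonneg (t - ε)]
  have hC2 : C * C ≤ ‖c‖ • C := by
    have h1 := cfc_mul (fun t : ℝ => t) (fun t : ℝ => t) C (by fun_prop) (by fun_prop)
    rw [cfc_id' ℝ C] at h1
    calc C * C = cfc (fun t : ℝ => t * t) C := h1.symm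
      _ ≤ cfc (fun t : ℝ => ‖c‖ * t) C := by
          refine cfc_mono fun t ht => ?_
          have h0 : 0 ≤ t := spectrum_nonneg_of_nonneg hC ht
          have hle : t ≤ ‖c‖ := by
            have := spectrum.norm_le_norm_of_mem ht
            rwa [Real.norm_eq_abs, abs_of_nonneg h0, hCdef, Unitization.norm_inr] at this
          nlinarith
      _ = ‖c‖ • C := by
          rw [cfc_const_mul _ _ _ (by fun_prop), cfc_id' ℝ C]
  have hxsq : ‖C * d‖ * ‖C * d‖ ≤ ‖c‖ * (ε / 4) := by
    have h1 : star (C * d) * (C * d) = d * (C * C) * d := by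
      rw [star_mul, hCsa.star_eq, hdsa.star_eq, mul_assoc, mul_assoc, mul_assoc]
    have h2 : d * (C * C) * d ≤ ‖c‖ • (d * H * d) := by
      calc d * (C * C) * d ≤ d * (‖c‖ • C) * d :=
            IsSelfAdjoint.conjugate_le_conjugate hC2 hdsa
        _ = ‖c‖ • (d * C * d) := by
            rw [mul_smul_comm, smul_mul_assoc]
        _ ≤ ‖c‖ • (d * H * d) :=
            smul_le_smul_of_nonneg_left
              (IsSelfAdjoint.conjugate_le_conjugate hCH hdsa) (norm_nonneg c)
    have hnn : 0 ≤ d * (C * C) * d := by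
      have hCC : (0 : Unitization ℂ B) ≤ C * C := by
        simpa [hCsa.star_eq] using star_mul_self_nonneg C
      simpa [hdsa.star_eq] using star_left_conjugate_nonneg hCC d
    calc ‖C * d‖ * ‖C * d‖ = ‖star (C * d) * (C * d)‖ :=
          (CStarRing.norm_star_mul_self).symm
      _ = ‖d * (C * C) * d‖ := by rw [h1]
      _ ≤ ‖‖c‖ • (d * H * d)‖ := CStarAlgebra.norm_le_norm_of_nonneg_of_le hnn h2
      _ = ‖c‖ * ‖d * H * d‖ := by
          rw [norm_smul, Real.norm_eq_abs, abs_of_nonneg (norm_nonneg c)]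
      _ ≤ ‖c‖ * (ε / 4) := mul_le_mul_of_nonneg_left hdHdnorm (norm_nonneg c)
  have hdC : ‖d * C‖ = ‖C * d‖ := by
    rw [← norm_star (d * C), star_mul, hCsa.star_eq, hdsa.star_eq]
  have hcm : H * v = v * H := hwfact.symm.trans hwfact'
  clear_value w v d
  have key : ‖C - w * C * w‖ ≤ 2 * ‖C * d‖ := by
    have hdef : C - w * C * w = d * C + w * (C * d) := by
      rw [hw1]; noncomm_ring
    calc ‖C - w * C * w‖ = ‖d * C + w * (C * d)‖ := by rw [hdef]
      _ ≤ ‖d * C‖ + ‖w * (C * d)‖ := norm_add_le _ _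
      _ ≤ ‖d * C‖ + ‖w‖ * ‖C * d‖ := by gcongr; exact norm_mul_le _ _
      _ ≤ ‖C * d‖ + 1 * ‖C * d‖ := by
          rw [hdC]; gcongr
      _ = 2 * ‖C * d‖ := by ring
  obtain ⟨b, hb⟩ : ∃ b : B, v * C * v = (b : Unitization ℂ B) := by
    refine ⟨(v * C * v).snd, ?_⟩
    have hfst : (v * C * v).fst = 0 := by
      simp [Unitization.fst_mul, hCdef, Unitization.fst_inr]
    exact Unitization.ext (hfst.trans (Unitization.fst_inr ℂ _).symm)
      (Unitization.snd_inr ℂ _).symm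
  have hfact : w * C * w = ((h * b * h : B) : Unitization ℂ B) := by
    have e1 : w * C * w = (H * v) * C * (v * H) := by
      rw [hwfact', hcm]
    have e2 : (H * v) * C * (v * H) = H * (v * C * v) * H := by noncomm_ring
    rw [e1, e2, hb, hHdef, ← Unitization.inr_mul, ← Unitization.inr_mul]
  refine ⟨h * b * h, ⟨b, rfl⟩, ?_⟩
  rw [dist_eq_norm]
  have hnorm : ‖c - h * b * h‖ = ‖C - w * C * w‖ := by
    rw [← Unitization.norm_inr (𝕜 := ℂ) (c - h * b * h), Unitization.inr_sub, hfact, hCdef]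
  rw [hnorm]
  calc ‖C - w * C * w‖ ≤ 2 * ‖C * d‖ := key
    _ < δ := by nlinarith [norm_nonneg (C * d)]

section helpers

variable {B : Type*} [NonUnitalCStarAlgebra B] [PartialOrder B] [StarOrderedRing B]

lemma sq_le_norm_smul' {a : B} (ha : 0 ≤ a) : a * a ≤ ‖a‖ • a := by
  have hsa : IsSelfAdjoint a := IsSelfAdjoint.of_nonneg ha
  have hA : (0 : Unitization ℂ B) ≤ (a : Unitization ℂ B) := inr_nonneg_iff.mpr ha
  have h1 : IsSelfAdjoint (a * a) := by
    rw [isSelfAdjoint_iff, star_mul, hsa.star_eq]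
  have h2 : IsSelfAdjoint (‖a‖ • a) := IsSelfAdjoint.smul (star_trivial ‖a‖) hsa
  rw [← inr_le_iff (a * a) (‖a‖ • a) h1 h2, Unitization.inr_mul, Unitization.inr_smul]
  set C : Unitization ℂ B := (a : Unitization ℂ B) with hCdef
  have hm := cfc_mul (fun t : ℝ => t) (fun t : ℝ => t) C (by fun_prop) (by fun_prop)
  rw [cfc_id' ℝ C] at hm
  calc C * C = cfc (fun t : ℝ => t * t) C := hm.symm
    _ ≤ cfc (fun t : ℝ => ‖a‖ * t) C := by
        refine cfc_mono fun t ht => ?_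
        have h0 : 0 ≤ t := spectrum_nonneg_of_nonneg hA ht
        have hle : t ≤ ‖a‖ := by
          have := spectrum.norm_le_norm_of_mem ht
          rwa [Real.norm_eq_abs, abs_of_nonneg h0, hCdef, Unitization.norm_inr] at this
        nlinarith
    _ = ‖a‖ • C := by rw [cfc_const_mul _ _ _ (by fun_prop), cfc_id' ℝ C]

lemma core_scaled {h c : B} (hh : 0 ≤ h) (hc : 0 ≤ c) {t : ℝ} (ht : 0 < t)
    (hch : c ≤ t • h) :
    c ∈ closure {z : B | ∃ b : B, z = h * b * h} := by
  have h' : 0 ≤ t • h := smul_nonneg ht.le hh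
  have hmem := core_hered h' hc hch
  refine closure_mono ?_ hmem
  rintro z ⟨b, rfl⟩
  exact ⟨(t * t) • b, by simp only [smul_mul_assoc, mul_smul_comm, smul_smul]⟩

omit [PartialOrder B] [StarOrderedRing B] in
lemma mem_closure_mul {h : B} {x y : B} (b : B)
    (hx : x ∈ closure {z : B | ∃ b : B, z = h * b * h})
    (hy : y ∈ closure {z : B | ∃ b : B, z = h * b * h}) :
    x * b * y ∈ closure {z : B | ∃ b : B, z = h * b * h} := by
  obtain ⟨u, hu, hul⟩ := mem_closure_iff_seq_limit.mp hx
  obtain ⟨w, hw, hwl⟩ := mem_closure_iff_seq_limit.mp hy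
  refine mem_closure_of_tendsto ((hul.mul tendsto_const_nhds).mul hwl)
    (Filter.Eventually.of_forall fun n => ?_)
  obtain ⟨p, hp⟩ := hu n
  obtain ⟨q, hq⟩ := hw n
  refine ⟨p * h * b * (h * q), ?_⟩
  rw [hp, hq]
  noncomm_ring

end helpers

/-- Let `A` be a σ-unital C*-algebra with strictly positive element `e` (i.e. the closure of
`e A e` is all of `A`), let `B` be a C*-algebra, and let `φ : A → B` be a contractive positive
linear map.  Then the hereditary subalgebra of `B` generated by `φ e`, namely the closure of
`φ(e) B φ(e)`, coincides with the closure of the linear span of `φ(A) B φ(A)`. -/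
theorem stmt10 {A B : Type*} [NonUnitalCStarAlgebra A] [PartialOrder A] [StarOrderedRing A]
    [NonUnitalCStarAlgebra B] [PartialOrder B] [StarOrderedRing B]
    (e : A) (he : 0 ≤ e)
    (hstrict : closure {x : A | ∃ a : A, x = e * a * e} = Set.univ)
    (φ : A →ₗ[ℂ] B) (hcontr : ∀ x : A, ‖φ x‖ ≤ ‖x‖)
    (hpos : ∀ x : A, 0 ≤ x → 0 ≤ φ x) :
    closure {z : B | ∃ b : B, z = φ e * b * φ e} =
      closure ((Submodule.span ℂ {z : B | ∃ (x y : A) (b : B), z = φ x * b * φ y} : Submodule ℂ B)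
        : Set B) := by
  have φcont : Continuous φ :=
    AddMonoidHomClass.continuous_of_bound φ 1 (fun x => by simpa using hcontr x)
  set S : Set B := {z : B | ∃ b : B, z = φ e * b * φ e} with hS
  set T : B →ₗ[ℂ] B := (LinearMap.mulRight ℂ (φ e)).comp (LinearMap.mulLeft ℂ (φ e)) with hT
  have hTS : (LinearMap.range T : Set B) = S := by
    ext z
    constructor
    · rintro ⟨b, rfl⟩
      exact ⟨b, by simp [hT]⟩
    · rintro ⟨b, rfl⟩
      exact ⟨b, by simp [hT]⟩
  have hMS : ((LinearMap.range T).topologicalClosure : Set B) = closure S := by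
    rw [Submodule.topologicalClosure_coe, hTS]
  set M : Submodule ℂ B := (LinearMap.range T).topologicalClosure with hM
  have hmemM : ∀ z : B, z ∈ M ↔ z ∈ closure S := fun z => by
    rw [← SetLike.mem_coe, hM, hMS]
  have hφe : 0 ≤ φ e := hpos e he
  have hesa : IsSelfAdjoint e := IsSelfAdjoint.of_nonneg he
  have step1 : ∀ a : A, φ (e * a * e) ∈ closure S := by
    intro a
    set T' : A →ₗ[ℂ] B :=
      φ.comp ((LinearMap.mulRight ℂ e).comp (LinearMap.mulLeft ℂ e)) with hT'
    have hKtop : Submodule.comap T' M = ⊤ := by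
      rw [eq_top_iff, ← CStarAlgebra.span_nonneg, Submodule.span_le]
      intro p hp
      have hp : (0 : A) ≤ p := hp
      have hval : T' p = φ (e * p * e) := by simp [hT', mul_assoc]
      simp only [SetLike.mem_coe, Submodule.mem_comap]
      rw [hval, hmemM]
      have hepe : 0 ≤ e * p * e := by
        simpa [hesa.star_eq] using star_left_conjugate_nonneg hp e
      have hle1 : e * p * e ≤ ‖p‖ • (e * e) := by
        simpa [hesa.star_eq] using CStarAlgebra.star_left_conjugate_le_norm_smul
          (a := e) (b := p) (IsSelfAdjoint.of_nonneg hp)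
      have hle2 : e * p * e ≤ (‖p‖ * ‖e‖) • e := by
        calc e * p * e ≤ ‖p‖ • (e * e) := hle1
          _ ≤ ‖p‖ • (‖e‖ • e) :=
              smul_le_smul_of_nonneg_left (sq_le_norm_smul' he) (norm_nonneg p)
          _ = (‖p‖ * ‖e‖) • e := by rw [smul_smul]
      have hφmono : φ (e * p * e) ≤ (‖p‖ * ‖e‖) • φ e := by
        have hsub : (0 : A) ≤ (‖p‖ * ‖e‖) • e - e * p * e := sub_nonneg.mpr hle2
        have h2 := hpos _ hsub
        rw [map_sub, LinearMap.map_smul_of_tower] at h2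
        exact sub_nonneg.mp h2
      rcases eq_or_lt_of_le (by positivity : (0 : ℝ) ≤ ‖p‖ * ‖e‖) with hz | hz
      · have hle0 : φ (e * p * e) ≤ 0 := by
          rw [← zero_smul ℝ (φ e), hz]
          exact hφmono
        have h0 : φ (e * p * e) = 0 := le_antisymm hle0 (hpos _ hepe)
        rw [h0]
        exact subset_closure ⟨0, by simp⟩
      · exact core_scaled hφe (hpos _ hepe) hz hφmono
    have ha : a ∈ Submodule.comap T' M := by rw [hKtop]; trivial
    have hval : T' a = φ (e * a * e) := by simp [hT', mul_assoc]
    rw [Submodule.mem_comap, hval, hmemM] at ha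
    exact ha
  have hφmem : ∀ x : A, φ x ∈ closure S := by
    intro x
    have hx : x ∈ closure {x : A | ∃ a : A, x = e * a * e} := by
      rw [hstrict]; trivial
    obtain ⟨u, hu, hul⟩ := mem_closure_iff_seq_limit.mp hx
    refine isClosed_closure.mem_of_tendsto ((φcont.tendsto x).comp hul)
      (Filter.Eventually.of_forall fun n => ?_)
    obtain ⟨a, ha⟩ := hu n
    simpa [Function.comp, ha] using step1 a
  apply Set.Subset.antisymm
  · refine closure_mono ?_
    rintro z ⟨b, rfl⟩
    exact Submodule.subset_span ⟨e, e, b, rfl⟩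
  · have hsub : (Submodule.span ℂ {z : B | ∃ (x y : A) (b : B), z = φ x * b * φ y}
        : Submodule ℂ B) ≤ M := by
      rw [Submodule.span_le]
      rintro z ⟨x, y, b, rfl⟩
      rw [SetLike.mem_coe, hmemM]
      exact mem_closure_mul b (hφmem x) (hφmem y)
    refine closure_minimal ?_ isClosed_closure
    intro z hz
    exact (hmemM z).mp (hsub hz)
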